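/- Let N ≥ 2 and let A be the (N+1)×(N+1) matrix equal to the P_N closure matrix except in the last row, which is (0,…,0, a_{N−1}, a_N). If a_{N−1} > 0, then A is a tridiagonal matrix with positive off-diagonal entries and hence is real diagonalizable. -/

import Mathlib

open Matrix

def RealDiagonalizable {n : ℕ} (A : Matrix (Fin n) (Fin n) ℝ) : Prop :=
  ∃ P D : Matrix (Fin n) (Fin n) ℝ, IsUnit P.det ∧ D.IsDiag ∧ A = P⁻¹ * D * P

/-- The `P_N` closure matrix with its last row replaced by the given row. -/
noncomputable def closureMatrix (N : ℕ) (lastRow : Fin (N + 1) → ℝ) :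
    Matrix (Fin (N + 1)) (Fin (N + 1)) ℝ := fun i j =>
  if (i : ℕ) = N then lastRow j
  else if (j : ℕ) = (i : ℕ) + 1 then (((i : ℕ) : ℝ) + 1) / (2 * ((i : ℕ) : ℝ) + 1)
  else if (i : ℕ) = (j : ℕ) + 1 then ((i : ℕ) : ℝ) / (2 * ((i : ℕ) : ℝ) + 1)
  else 0

lemma tridiag_realDiag {n : ℕ} (A : Matrix (Fin (n+1)) (Fin (n+1)) ℝ)
    (h0 : ∀ i j : Fin (n+1), ((i : ℕ) + 1 < (j : ℕ) ∨ (j : ℕ) + 1 < (i : ℕ)) → A i j = 0)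
    (hp : ∀ i j : Fin (n+1), (j : ℕ) = (i : ℕ) + 1 → 0 < A i j ∧ 0 < A j i) :
    RealDiagonalizable A := by
  set g : ℕ → ℝ := fun k =>
    if h : k + 1 < n + 1 then
      Real.sqrt (A ⟨k, Nat.lt_of_succ_lt h⟩ ⟨k+1, h⟩ / A ⟨k+1, h⟩ ⟨k, Nat.lt_of_succ_lt h⟩)
    else 1 with hg_def
  have hg : ∀ k, 0 < g k := by
    intro k
    rw [hg_def]
    dsimp only
    split
    · rename_i h
      have := hp ⟨k, Nat.lt_of_succ_lt h⟩ ⟨k+1, h⟩ rfl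
      exact Real.sqrt_pos.2 (div_pos this.1 this.2)
    · exact one_pos
  set d : Fin (n+1) → ℝ := fun i => ∏ k ∈ Finset.range (i : ℕ), g k with hd_def
  have hd : ∀ i, 0 < d i := fun i => Finset.prod_pos (fun k _ => hg k)
  have hdne : ∀ i, d i ≠ 0 := fun i => (hd i).ne'
  -- key relation
  have key : ∀ i j : Fin (n+1), (j : ℕ) = (i : ℕ) + 1 →
      d j ^ 2 * A j i = d i ^ 2 * A i j := by
    intro i j hij
    have hlt : (i : ℕ) + 1 < n + 1 := hij ▸ j.isLt
    have hji : j = ⟨(i : ℕ) + 1, hlt⟩ := Fin.ext hij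
    have hii : i = ⟨(i : ℕ), Nat.lt_of_succ_lt hlt⟩ := Fin.ext rfl
    have hdj : d j = d i * g (i : ℕ) := by
      rw [hd_def]; dsimp only; rw [hij, Finset.prod_range_succ]
    have hgi : g (i : ℕ) = Real.sqrt (A i j / A j i) := by
      rw [hg_def]; dsimp only; rw [dif_pos hlt, ← hji, ← hii]
    have hpp := hp i j hij
    have hsq : g (i : ℕ) ^ 2 = A i j / A j i := by
      rw [hgi, Real.sq_sqrt (le_of_lt (div_pos hpp.1 hpp.2))]
    rw [hdj, mul_pow, hsq]
    field_simp [hpp.2.ne']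
  set S : Matrix (Fin (n+1)) (Fin (n+1)) ℝ := fun i j => d i * A i j * (d j)⁻¹ with hS_def
  have hsymm : ∀ i j, S j i = S i j := by
    have main : ∀ i j : Fin (n+1), (j : ℕ) = (i : ℕ) + 1 → S j i = S i j := by
      intro i j hij
      have hk := key i j hij
      rw [hS_def]
      dsimp only
      have h2 : (d j * A j i * (d i)⁻¹) * (d i * d j) = (d i * A i j * (d j)⁻¹) * (d i * d j) := by
        field_simp [hdne i, hdne j]
        linear_combination hk
      exact mul_right_cancel₀ (mul_ne_zero (hdne i) (hdne j)) h2
    intro i j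
    rcases lt_trichotomy (i : ℕ) (j : ℕ) with h | h | h
    · rcases eq_or_lt_of_le (Nat.succ_le_of_lt h) with h1 | h1
      · exact main i j h1.symm
      · rw [hS_def]; dsimp only
        rw [h0 i j (Or.inl h1), h0 j i (Or.inr h1)]; ring
    · rw [Fin.ext h]
    · rcases eq_or_lt_of_le (Nat.succ_le_of_lt h) with h1 | h1
      · exact (main j i h1.symm).symm
      · rw [hS_def]; dsimp only
        rw [h0 i j (Or.inr h1), h0 j i (Or.inl h1)]; ring
  have hS : S.IsHermitian := by
    ext i j
    simp only [conjTranspose_apply, star_trivial]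
    exact hsymm i j
  set U : Matrix (Fin (n+1)) (Fin (n+1)) ℝ := (↑(hS.eigenvectorUnitary) : Matrix (Fin (n+1)) (Fin (n+1)) ℝ) with hU_def
  have hUmem := hS.eigenvectorUnitary.2
  have hU1 : star U * U = 1 := (Matrix.mem_unitaryGroup_iff').mp hUmem
  have hU2 : U * star U = 1 := (Matrix.mem_unitaryGroup_iff).mp hUmem
  set Dd : Matrix (Fin (n+1)) (Fin (n+1)) ℝ := diagonal d with hDd_def
  set Dd' : Matrix (Fin (n+1)) (Fin (n+1)) ℝ := diagonal (fun i => (d i)⁻¹) with hDd'_def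
  have hDD' : Dd * Dd' = 1 := by
    rw [hDd_def, hDd'_def, diagonal_mul_diagonal]
    rw [show (fun i => d i * (d i)⁻¹) = fun _ => (1:ℝ) from funext fun i => mul_inv_cancel₀ (hdne i)]
    exact diagonal_one
  have hD'D : Dd' * Dd = 1 := by
    rw [hDd_def, hDd'_def, diagonal_mul_diagonal]
    rw [show (fun i => (d i)⁻¹ * d i) = fun _ => (1:ℝ) from funext fun i => inv_mul_cancel₀ (hdne i)]
    exact diagonal_one
  have hSA : S = Dd * A * Dd' := by
    ext i j
    rw [hS_def, hDd_def, hDd'_def]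
    simp [Matrix.mul_apply, Matrix.diagonal, Finset.sum_ite_eq, Finset.sum_ite_eq']
  have hAS : A = Dd' * S * Dd := by
    rw [hSA]
    refine Eq.symm ?_
    calc Dd' * (Dd * A * Dd') * Dd = (Dd' * Dd) * A * (Dd' * Dd) := by noncomm_ring
    _ = A := by rw [hD'D, one_mul, mul_one]
  set Dg : Matrix (Fin (n+1)) (Fin (n+1)) ℝ := diagonal (RCLike.ofReal ∘ hS.eigenvalues) with hDg_def
  have hspec : S = U * Dg * star U := hS.spectral_theorem
  set P : Matrix (Fin (n+1)) (Fin (n+1)) ℝ := star U * Dd with hP_def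
  have hPinv : P * (Dd' * U) = 1 := by
    calc P * (Dd' * U) = star U * (Dd * Dd') * U := by rw [hP_def]; noncomm_ring
    _ = 1 := by rw [hDD', mul_one, hU1]
  have hPinv' : P⁻¹ = Dd' * U := Matrix.inv_eq_right_inv hPinv
  refine ⟨P, Dg, ?_, Matrix.isDiag_diagonal _, ?_⟩
  · have := congrArg Matrix.det hPinv
    rw [Matrix.det_mul, Matrix.det_one] at this
    exact isUnit_iff_exists_inv.2 ⟨_, this⟩
  · rw [hPinv', hAS, hspec]
    noncomm_ring

/-- The 2-degree-of-freedom closure matrix, with last row `(0, …, 0, a_{N-1}, a_N)` and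
`a_{N-1} > 0`, is tridiagonal with positive off-diagonal entries and real diagonalizable. -/
theorem closure_dof2_hyperbolic (N : ℕ) (hN : 2 ≤ N) (a1 a0 : ℝ) (ha1 : 0 < a1) :
    let A := closureMatrix N fun j =>
      if (j : ℕ) = N - 1 then a1 else if (j : ℕ) = N then a0 else 0
    (∀ i j : Fin (N + 1), ((i : ℕ) + 1 < (j : ℕ) ∨ (j : ℕ) + 1 < (i : ℕ)) → A i j = 0) ∧
      (∀ i j : Fin (N + 1), (j : ℕ) = (i : ℕ) + 1 → 0 < A i j ∧ 0 < A j i) ∧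
      RealDiagonalizable A := by
  intro A
  have h0 : ∀ i j : Fin (N + 1), ((i : ℕ) + 1 < (j : ℕ) ∨ (j : ℕ) + 1 < (i : ℕ)) → A i j = 0 := by
    intro i j h
    have hi := i.isLt
    have hj := j.isLt
    show closureMatrix N _ i j = 0
    simp only [closureMatrix]
    rcases h with h | h <;> split_ifs <;> first | rfl | (exfalso; omega)
  have hp : ∀ i j : Fin (N + 1), (j : ℕ) = (i : ℕ) + 1 → 0 < A i j ∧ 0 < A j i := by
    intro i j hij
    have hi := i.isLt
    have hj := j.isLt
    constructor
    · show 0 < closureMatrix N _ i j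
      unfold closureMatrix
      have hiN : (i : ℕ) ≠ N := by omega
      rw [if_neg hiN, if_pos hij]
      have : (0:ℝ) < ((i : ℕ) : ℝ) + 1 := by positivity
      have : (0:ℝ) < 2 * ((i : ℕ) : ℝ) + 1 := by positivity
      positivity
    · show 0 < closureMatrix N _ j i
      unfold closureMatrix
      by_cases hjN : (j : ℕ) = N
      · have hi1 : (i : ℕ) = N - 1 := by omega
        simp only [if_pos hjN, if_pos hi1]
        exact ha1
      · have e1 : ¬ ((i : ℕ) = (j : ℕ) + 1) := by omega
        have e2 : (j : ℕ) = (i : ℕ) + 1 := hij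
        rw [if_neg hjN, if_neg e1, if_pos e2]
        have hjpos : 0 < (j : ℕ) := by omega
        apply div_pos
        · exact Nat.cast_pos.2 hjpos
        · positivity
  exact ⟨h0, hp, tridiag_realDiag A h0 hp⟩
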